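/- The improper integral I = ∫₀¹ exp(∑_{k=0}^∞ r^{k!}) dr converges: the function r ↦ exp(∑_{k=0}^∞ r^{k!}) is integrable on the interval (0, 1). -/
import Mathlib

open MeasureTheory Finset

lemma fact_mul_le_aux {N : ℕ} (hN : 1 ≤ N) (k : ℕ) :
    (k + 1) * N.factorial ≤ (N + k).factorial := by
  induction k with
  | zero => simp
  | succ k ih =>
    have h2 : 2 * ((k + 1) * N.factorial) ≤ (N + k + 1) * (N + k).factorial := by
      apply Nat.mul_le_mul _ ih
      omega
    calc (k + 2) * N.factorial ≤ 2 * ((k + 1) * N.factorial) := by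
          have := Nat.factorial_pos N; nlinarith
      _ ≤ (N + k + 1) * (N + k).factorial := h2
      _ = (N + (k + 1)).factorial := by rw [← Nat.add_assoc, Nat.factorial_succ]

lemma summable_fact_pow {r : ℝ} (hr0 : 0 < r) (hr1 : r < 1) :
    Summable (fun k : ℕ => r ^ (Nat.factorial k)) := by
  apply Summable.of_nonneg_of_le (fun k => by positivity)
    (fun k => pow_le_pow_of_le_one hr0.le hr1.le (Nat.self_le_factorial k))
    (summable_geometric_of_lt_one hr0.le hr1)

set_option maxHeartbeats 2000000 in
lemma key_bound {r : ℝ} (hr0 : 0 < r) (hr1 : r < 1) :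
    Real.exp (∑' k : ℕ, r ^ (Nat.factorial k)) ≤
      9 * Real.exp 4.5 * (1 - r) ^ (-(1/2) : ℝ) := by
  set ε : ℝ := 1 - r with hεdef
  have hε : 0 < ε := by simp [hεdef]; linarith
  have hε1 : ε < 1 := by simp [hεdef]; linarith
  have hsum := summable_fact_pow hr0 hr1
  have hex : ∃ n : ℕ, 1/ε ≤ (Nat.factorial n : ℝ) := by
    refine ⟨⌈1/ε⌉₊, (Nat.le_ceil _).trans ?_⟩
    exact_mod_cast Nat.self_le_factorial _
  obtain ⟨N, hN, hNmin⟩ : ∃ n : ℕ, 1/ε ≤ (Nat.factorial n : ℝ) ∧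
      ∀ m < n, ¬ (1/ε ≤ (Nat.factorial m : ℝ)) :=
    ⟨Nat.find hex, Nat.find_spec hex, fun m hm => Nat.find_min hex hm⟩
  have honelt : 1 < 1/ε := by rw [lt_div_iff₀ hε]; linarith
  have hN1 : 1 ≤ N := by
    rcases Nat.eq_zero_or_pos N with h | h
    · exfalso; rw [h] at hN; simp at hN
      rw [one_lt_div hε] at honelt
      rw [inv_le_one_iff₀] at hN
      rcases hN with h' | h' <;> linarith
    · exact h
  have hNm : ((N - 1).factorial : ℝ) < 1/ε := by
    have := hNmin (N - 1) (by omega)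
    push_neg at this
    exact this
  -- r ^ N! ≤ 1/2
  have hhalf : r ^ (Nat.factorial N) ≤ 1/2 := by
    have h1 : r ≤ Real.exp (-ε) := by
      have := Real.add_one_le_exp (-ε); linarith
    have h2 : r ^ (Nat.factorial N) ≤ Real.exp (-ε) ^ (Nat.factorial N) :=
      pow_le_pow_left₀ hr0.le h1 _
    have h3 : Real.exp (-ε) ^ (Nat.factorial N) =
        Real.exp ((Nat.factorial N : ℝ) * (-ε)) := (Real.exp_nat_mul _ _).symm
    have h4 : (Nat.factorial N : ℝ) * (-ε) ≤ -1 := by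
      have : 1 ≤ ε * (Nat.factorial N : ℝ) := by
        rw [div_le_iff₀ hε] at hN; linarith [hN]
      nlinarith
    have h5 : Real.exp ((Nat.factorial N : ℝ) * (-ε)) ≤ Real.exp (-1) :=
      Real.exp_le_exp.2 h4
    have h6 : Real.exp (-1) ≤ 1/2 := by
      rw [Real.exp_neg, inv_le_comm₀ (Real.exp_pos 1) (by norm_num)]
      have := Real.exp_one_gt_d9; norm_num; linarith
    linarith [h2, h5, h3 ▸ h2]
  -- tail terms
  have htail : ∀ k : ℕ, r ^ (Nat.factorial (k + N)) ≤ (1/2 : ℝ) ^ (k + 1) := by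
    intro k
    have hexp : (k + 1) * Nat.factorial N ≤ Nat.factorial (k + N) := by
      have := fact_mul_le_aux hN1 k
      rwa [Nat.add_comm N k] at this
    calc r ^ (Nat.factorial (k + N)) ≤ r ^ ((k + 1) * Nat.factorial N) :=
          pow_le_pow_of_le_one hr0.le hr1.le hexp
      _ = (r ^ Nat.factorial N) ^ (k + 1) := by rw [← pow_mul, Nat.mul_comm]
      _ ≤ (1/2 : ℝ) ^ (k + 1) := pow_le_pow_left₀ (by positivity) hhalf _
  have hS : (∑' k : ℕ, r ^ (Nat.factorial k)) ≤ (N : ℝ) + 1 := by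
    rw [← Summable.sum_add_tsum_nat_add N hsum]
    have hhead : ∑ k ∈ range N, r ^ (Nat.factorial k) ≤ (N : ℝ) := by
      calc ∑ k ∈ range N, r ^ (Nat.factorial k) ≤ ∑ _k ∈ range N, (1:ℝ) :=
            Finset.sum_le_sum (fun k _ => pow_le_one₀ hr0.le hr1.le)
        _ = N := by simp
    have hs1 : Summable (fun k : ℕ => r ^ (Nat.factorial (k + N))) :=
      (summable_nat_add_iff N).2 hsum
    have hs2 : Summable (fun k : ℕ => ((1:ℝ)/2) ^ (k + 1)) := by
      simp only [pow_succ]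
      exact (summable_geometric_of_lt_one (by norm_num) (by norm_num)).mul_right _
    have hval : (∑' k : ℕ, ((1:ℝ)/2) ^ (k + 1)) = 1 := by
      simp only [pow_succ]
      rw [tsum_mul_right, tsum_geometric_of_lt_one (by norm_num) (by norm_num)]
      norm_num
    have htailsum : (∑' k : ℕ, r ^ (Nat.factorial (k + N))) ≤ 1 := by
      calc (∑' k : ℕ, r ^ (Nat.factorial (k + N))) ≤ ∑' k : ℕ, ((1:ℝ)/2) ^ (k + 1) :=
            Summable.tsum_le_tsum htail hs1 hs2
        _ = 1 := hval
    linarith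
  -- factorial beats 9^n
  have hfac : (9:ℝ) ^ (N - 1) ≤ Real.exp 9 * ((N-1).factorial : ℝ) := by
    have h0 : (9:ℝ) ^ (N-1) / ((N-1).factorial : ℝ) ≤ Real.exp 9 := by
      refine le_trans ?_ (Real.sum_le_exp_of_nonneg (by norm_num : (0:ℝ) ≤ 9) (N - 1 + 1))
      exact Finset.single_le_sum (f := fun i => (9:ℝ)^i / (Nat.factorial i : ℝ))
        (fun i _ => by positivity) (Finset.self_mem_range_succ _)
    have hfp : (0:ℝ) < ((N-1).factorial : ℝ) := by exact_mod_cast Nat.factorial_pos _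
    rw [div_le_iff₀ hfp] at h0
    linarith
  have hL : Real.exp ((N:ℝ) + 1) ^ 2 ≤ 81 * Real.exp 9 * (1/ε) := by
    have e1 : Real.exp ((N:ℝ)+1) ^ 2 = Real.exp 2 ^ (N + 1) := by
      rw [← Real.exp_nat_mul, ← Real.exp_nat_mul]
      congr 1
      push_cast
      ring
    have e2 : Real.exp 2 ^ (N + 1) ≤ 9 ^ (N + 1) := by
      apply pow_le_pow_left₀ (Real.exp_pos 2).le
      have h := Real.exp_one_lt_d9
      have h2 : Real.exp 2 = Real.exp 1 ^ 2 := by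
        rw [← Real.exp_nat_mul]; norm_num
      nlinarith [Real.exp_pos 1]
    have e3 : (9:ℝ) ^ (N + 1) = 81 * 9 ^ (N - 1) := by
      have hNe : N + 1 = (N - 1) + 2 := by omega
      rw [hNe, pow_add]; ring
    calc Real.exp ((N:ℝ)+1)^2 = Real.exp 2 ^ (N+1) := e1
      _ ≤ 9 ^ (N+1) := e2
      _ = 81 * 9 ^ (N-1) := e3
      _ ≤ 81 * (Real.exp 9 * ((N-1).factorial:ℝ)) := by linarith
      _ ≤ 81 * Real.exp 9 * (1/ε) := by nlinarith [Real.exp_pos 9, hNm.le]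
  have hR : (9 * Real.exp 4.5 * ε ^ (-(1/2):ℝ)) ^ 2 = 81 * Real.exp 9 * (1/ε) := by
    have h1 : (ε ^ (-(1/2):ℝ)) ^ (2:ℕ) = ε ^ ((-(1/2):ℝ) * 2) := by
      rw [← Real.rpow_natCast (ε ^ (-(1/2):ℝ)) 2, ← Real.rpow_mul hε.le]
      norm_num
    have h2 : Real.exp 4.5 ^ 2 = Real.exp 9 := by
      rw [← Real.exp_nat_mul]; norm_num
    have h3 : ε ^ ((-(1/2):ℝ)*2) = 1/ε := by
      have hx : ((-(1/2):ℝ))*2 = -1 := by norm_num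
      rw [hx, Real.rpow_neg_one, one_div]
    rw [mul_pow, mul_pow, h1, h2, h3]; ring
  have hstep : Real.exp ((N:ℝ)+1) ≤ 9 * Real.exp 4.5 * ε ^ (-(1/2):ℝ) := by
    have hb : (0:ℝ) ≤ 9 * Real.exp 4.5 * ε ^ (-(1/2):ℝ) := by positivity
    exact (pow_le_pow_iff_left₀ (Real.exp_pos _).le hb (by norm_num)).1
      (hL.trans_eq hR.symm)
  calc Real.exp (∑' k : ℕ, r ^ (Nat.factorial k)) ≤ Real.exp ((N:ℝ)+1) :=
        Real.exp_le_exp.2 hS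
    _ ≤ _ := hstep


theorem lacunary_integral_converges :
    IntegrableOn (fun r : ℝ => Real.exp (∑' k : ℕ, r ^ (Nat.factorial k)))
      (Set.Ioo (0:ℝ) 1) := by
  -- measurability
  have hmeas : AEStronglyMeasurable (fun r : ℝ => (∑' k : ℕ, r ^ (Nat.factorial k)))
      (volume.restrict (Set.Ioo (0:ℝ) 1)) := by
    apply aestronglyMeasurable_of_tendsto_ae (u := Filter.atTop)
      (f := fun n (r : ℝ) => ∑ k ∈ Finset.range n, r ^ (Nat.factorial k))
    · intro n
      exact (continuous_finset_sum _ fun k _ => continuous_pow _).aestronglyMeasurable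
    · filter_upwards [ae_restrict_mem measurableSet_Ioo] with x hx
      exact (summable_fact_pow hx.1 hx.2).hasSum.tendsto_sum_nat
  have hexp : AEStronglyMeasurable
      (fun r : ℝ => Real.exp (∑' k : ℕ, r ^ (Nat.factorial k)))
      (volume.restrict (Set.Ioo (0:ℝ) 1)) :=
    Real.continuous_exp.comp_aestronglyMeasurable hmeas
  -- integrable majorant
  have h1 : IntervalIntegrable (fun x : ℝ => x ^ (-(1/2) : ℝ)) volume 0 1 :=
    intervalIntegral.intervalIntegrable_rpow' (by norm_num)
  have h2 : IntervalIntegrable (fun x : ℝ => (1 - x) ^ (-(1/2) : ℝ)) volume 0 1 := by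
    have := (h1.comp_sub_left 1).symm
    simpa using this
  have h3 : IntegrableOn (fun x : ℝ => (1 - x) ^ (-(1/2) : ℝ)) (Set.Ioo (0:ℝ) 1) := by
    have := (intervalIntegrable_iff_integrableOn_Ioc_of_le (by norm_num : (0:ℝ) ≤ 1)).1 h2
    exact this.mono_set Set.Ioo_subset_Ioc_self
  have h4 : IntegrableOn
      (fun x : ℝ => 9 * Real.exp 4.5 * (1 - x) ^ (-(1/2) : ℝ)) (Set.Ioo (0:ℝ) 1) :=
    h3.const_mul _
  apply Integrable.mono' h4 hexp
  filter_upwards [ae_restrict_mem measurableSet_Ioo] with x hx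
  rw [Real.norm_eq_abs, abs_of_pos (Real.exp_pos _)]
  exact key_bound hx.1 hx.2
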